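/- Let u ∈ ℤ_p be rational with φ_{p,q}(u) not rational. Then lim_{n→∞} (p^{n+1}·|u_{n+1}|_∞·q^{−r_n(u)})^{1/n} = 1; in particular the real power series Σ_{n=0}^∞ (p^{n+1}·u_{n+1}·q^{−r_n(u)})·T^n has radius of convergence 1 for the archimedean metric. -/

import Mathlib

open scoped Classical

/-- `ε₀(u)`: the unique integer in `{0, …, p−1}` congruent to `u` modulo `p`. -/
noncomputable def eps0 {p : ℕ} [Fact p.Prime] (u : ℤ_[p]) : ℕ := (PadicInt.toZMod u).val

open scoped Classical in
/-- `r_n(u)`: the number of indices `0 ≤ i ≤ n` with `p ∤ g^i(u)`. -/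
noncomputable def rcount (p : ℕ) [Fact p.Prime] (g : ℤ_[p] → ℤ_[p]) (u : ℤ_[p]) (n : ℕ) : ℕ :=
  ((Finset.range (n + 1)).filter fun i => ¬ (p : ℤ_[p]) ∣ g^[i] u).card

/-- `φ_{p,q}(u) = Σ ε₀(-q·g^n(u)) p^n`, for a given iteration map `g`. -/
noncomputable def phi (p q : ℕ) [Fact p.Prime] (g : ℤ_[p] → ℤ_[p]) (u : ℤ_[p]) : ℤ_[p] :=
  ∑' n : ℕ, (eps0 (-((q : ℤ_[p]) * g^[n] u)) : ℤ_[p]) * (p : ℤ_[p]) ^ n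

open Filter
open scoped NNReal ENNReal Topology

lemma eps0_lt {p : ℕ} [Fact p.Prime] (u : ℤ_[p]) : eps0 u < p := by
  haveI : NeZero p := ⟨(Fact.out : p.Prime).ne_zero⟩
  exact ZMod.val_lt _

lemma summable_phi (p q : ℕ) [Fact p.Prime] (g : ℤ_[p] → ℤ_[p]) (u : ℤ_[p]) :
    Summable (fun n : ℕ => (eps0 (-((q : ℤ_[p]) * g^[n] u)) : ℤ_[p]) * (p : ℤ_[p]) ^ n) := by
  apply Summable.of_norm_bounded (g := fun n => ((p:ℝ)⁻¹) ^ n)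
  · apply summable_geometric_of_lt_one (by positivity)
    rw [inv_lt_one_iff₀]; right; exact_mod_cast (Fact.out : p.Prime).one_lt
  · intro n
    calc ‖(eps0 (-((q : ℤ_[p]) * g^[n] u)) : ℤ_[p]) * (p : ℤ_[p]) ^ n‖
        ≤ ‖(eps0 (-((q : ℤ_[p]) * g^[n] u)) : ℤ_[p])‖ * ‖(p:ℤ_[p]) ^ n‖ := norm_mul_le _ _
      _ ≤ 1 * ((p:ℝ)⁻¹)^n := by
          apply mul_le_mul (PadicInt.norm_le_one _) (le_of_eq ?_) (norm_nonneg _) zero_le_one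
          rw [PadicInt.norm_p_pow, inv_pow, ← zpow_natCast (p:ℝ), ← zpow_neg]
      _ = ((p:ℝ)⁻¹)^n := one_mul _

lemma phi_rat_of_periodic (p q : ℕ) [Fact p.Prime] (g : ℤ_[p] → ℤ_[p]) (u : ℤ_[p])
    (m T : ℕ) (hT : 0 < T) (hUU : g^[m + T] u = g^[m] u) :
    ((phi p q g u : ℤ_[p]) : ℚ_[p]) ∈ Set.range ((↑) : ℚ → ℚ_[p]) := by
  have hp1 : 1 < p := (Fact.out : p.Prime).one_lt
  set F : ℕ → ℤ_[p] := fun n => (eps0 (-((q : ℤ_[p]) * g^[n] u)) : ℤ_[p]) * (p : ℤ_[p]) ^ n with hF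
  have hsum : Summable F := summable_phi p q g u
  have hper : ∀ t : ℕ, g^[t + (m + T)] u = g^[t + m] u := by
    intro t
    rw [Function.iterate_add_apply, Function.iterate_add_apply g t m, hUU]
  -- key identity
  have h1 : (∑ i ∈ Finset.range m, F i) + ∑' i, F (i + m) = ∑' i, F i :=
    Summable.sum_add_tsum_nat_add m hsum
  have h2 : (∑ i ∈ Finset.range (m + T), F i) + ∑' i, F (i + (m + T)) = ∑' i, F i :=
    Summable.sum_add_tsum_nat_add (m + T) hsum
  have h3 : ∀ i : ℕ, F (i + (m + T)) = (p : ℤ_[p]) ^ T * F (i + m) := by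
    intro i
    have e : F (i + (m + T)) = (eps0 (-((q : ℤ_[p]) * g^[i + (m + T)] u)) : ℤ_[p]) * (p : ℤ_[p]) ^ (i + (m + T)) := rfl
    have e' : F (i + m) = (eps0 (-((q : ℤ_[p]) * g^[i + m] u)) : ℤ_[p]) * (p : ℤ_[p]) ^ (i + m) := rfl
    rw [e, e', hper i, pow_add, pow_add]
    ring
  have h4 : ∑' i, F (i + (m + T)) = (p : ℤ_[p]) ^ T * ∑' i, F (i + m) := by
    rw [tsum_congr h3]
    exact Summable.tsum_mul_left _ ((summable_nat_add_iff m).2 hsum)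
  set Φ : ℤ_[p] := phi p q g u with hΦdef
  have hΦ : Φ = ∑' i, F i := rfl
  rw [← hΦ] at h1 h2
  have key : (1 - (p : ℤ_[p]) ^ T) * Φ
      = (∑ i ∈ Finset.range (m + T), F i) - (p : ℤ_[p]) ^ T * ∑ i ∈ Finset.range m, F i := by
    have e1 : ∑' i, F (i + m) = Φ - ∑ i ∈ Finset.range m, F i := by
      rw [← h1]; ring
    have e2 : ∑' i, F (i + (m + T)) = Φ - ∑ i ∈ Finset.range (m + T), F i := by
      rw [← h2]; ring
    rw [e1, e2] at h4
    linear_combination h4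
  have hs : ∀ k : ℕ, (∑ i ∈ Finset.range k, F i)
      = ((∑ i ∈ Finset.range k, eps0 (-((q : ℤ_[p]) * g^[i] u)) * p ^ i : ℕ) : ℤ_[p]) := by
    intro k
    rw [Nat.cast_sum]
    exact Finset.sum_congr rfl (by intro i _; push_cast; ring)
  set N : ℕ → ℕ := fun k => ∑ i ∈ Finset.range k, eps0 (-((q : ℤ_[p]) * g^[i] u)) * p ^ i with hN
  have key2 : (1 - (p : ℤ_[p]) ^ T) * Φ = ((↑(N (m + T)) : ℤ_[p]) - (p:ℤ_[p]) ^ T * (↑(N m) : ℤ_[p])) := by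
    rw [key, hs, hs]
  set Z : ℤ := (N (m + T) : ℤ) - (p:ℤ) ^ T * (N m : ℤ) with hZ
  have key3 : (1 - (p : ℚ_[p]) ^ T) * ((Φ : ℤ_[p]) : ℚ_[p]) = ((Z : ℚ) : ℚ_[p]) := by
    have h := congrArg ((↑) : ℤ_[p] → ℚ_[p]) key2
    push_cast at h
    push_cast [hZ]
    exact h
  have hne : (1 - (p : ℚ) ^ T) ≠ 0 := by
    have : (2:ℚ) ≤ (p:ℚ) ^ T := by
      calc (2:ℚ) ≤ (p:ℚ) := by exact_mod_cast hp1
        _ = (p:ℚ) ^ 1 := (pow_one _).symm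
        _ ≤ (p:ℚ) ^ T := by
            apply pow_le_pow_right₀ (by exact_mod_cast hp1.le) hT
    intro h; nlinarith
  have hne' : (1 - (p : ℚ_[p]) ^ T) ≠ 0 := by
    intro h
    have h2 : ((1 - (p:ℚ)^T : ℚ) : ℚ_[p]) = 0 := by push_cast; linear_combination h
    exact hne (by exact_mod_cast h2)
  refine ⟨(Z : ℚ) / (1 - (p:ℚ) ^ T), ?_⟩
  have hcast : (((Z : ℚ) / (1 - (p:ℚ) ^ T) : ℚ) : ℚ_[p])
      = ((Z:ℚ) : ℚ_[p]) / (1 - (p : ℚ_[p]) ^ T) := by push_cast; ring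
  rw [hcast, div_eq_iff hne']
  linear_combination -key3


-- helper: |log y| bound
lemma abs_log_le {y : ℝ} (hy : 0 < y) : |Real.log y| ≤ max (y - 1) (y⁻¹ - 1) := by
  have h1 : Real.log y ≤ y - 1 := Real.log_le_sub_one_of_pos hy
  have h2 : -Real.log y ≤ y⁻¹ - 1 := by
    rw [← Real.log_inv]
    exact Real.log_le_sub_one_of_pos (by positivity)
  have m1 := le_max_left (y - 1) (y⁻¹ - 1)
  have m2 := le_max_right (y - 1) (y⁻¹ - 1)
  rw [abs_le]; constructor <;> linarith

-- helper: telescoping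
lemma abs_telescope (f w : ℕ → ℝ) (h : ∀ i, |f (i + 1) - f i| ≤ w i) (n : ℕ) :
    |f n - f 0| ≤ ∑ i ∈ Finset.range n, w i := by
  induction n with
  | zero => simp
  | succ n ih =>
      rw [Finset.sum_range_succ]
      have := abs_sub_le (f (n + 1)) (f n) (f 0)
      have := h n
      linarith
-- helper: denominator not divisible by p
lemma den_not_dvd {p : ℕ} [Fact p.Prime] (r : ℚ) (h : ‖(r : ℚ_[p])‖ ≤ 1) : ¬ p ∣ r.den := by
  intro hdvd
  have hp1 : 1 < p := (Fact.out : p.Prime).one_lt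
  have hr0 : r ≠ 0 := by
    intro h0; rw [h0] at hdvd; simp [Rat.den_ofNat] at hdvd; omega
  have hnorm : padicNorm p r ≤ 1 := by
    have := Padic.eq_padicNorm (p := p) r
    rw [this] at h
    exact_mod_cast h
  have hvd : 1 ≤ padicValNat p r.den := by
    rcases Nat.eq_zero_or_pos (padicValNat p r.den) with h0 | h0
    · exfalso
      rcases padicValNat.eq_zero_iff.1 h0 with h' | h' | h'
      · omega
      · exact r.den_nz h'
      · exact h' hdvd
    · exact h0
  have hnum : padicValInt p r.num = 0 := by
    apply padicValInt.eq_zero_of_not_dvd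
    intro hd
    have hc := r.reduced
    have : (p:ℤ) ∣ (r.num.natAbs : ℤ) := by rwa [Int.dvd_natAbs]
    have hpnum : p ∣ r.num.natAbs := by exact_mod_cast this
    have hg : p ∣ Nat.gcd r.num.natAbs r.den := Nat.dvd_gcd hpnum hdvd
    rw [Nat.Coprime] at hc
    rw [hc] at hg
    have := Nat.le_of_dvd one_pos hg
    omega
  have hval : padicValRat p r ≤ -1 := by
    rw [padicValRat, hnum]
    omega
  rw [padicNorm.eq_zpow_of_nonzero hr0] at hnorm
  have : (1:ℚ) < (p:ℚ) ^ (-padicValRat p r) := by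
    apply one_lt_zpow₀ (by exact_mod_cast hp1)
    omega
  linarith

-- helper: multiply by denominator-multiple gives integer
lemma exists_int_of_den_dvd {x : ℚ} {b : ℕ} (h : x.den ∣ b) : ∃ k : ℤ, (b : ℚ) * x = k := by
  rcases h with ⟨c, hc⟩
  refine ⟨x.num * c, ?_⟩
  have hden : (x.den : ℚ) ≠ 0 := by exact_mod_cast x.den_nz
  rw [hc]
  push_cast
  have hx : (x.den : ℚ) * x = x.num := by
    rw [mul_comm, Rat.mul_den_eq_num]
  calc (x.den : ℚ) * (c:ℚ) * x = (c:ℚ) * ((x.den:ℚ) * x) := by ring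
    _ = (c:ℚ) * x.num := by rw [hx]
    _ = (x.num : ℚ) * c := by ring

-- helper: denominator divides integer multiplier
lemma den_dvd_of_int_mul {x : ℚ} {m : ℤ} (hm : m ≠ 0) {k : ℤ} (h : (m : ℚ) * x = k) :
    (x.den : ℤ) ∣ m := by
  have hx : x = (k : ℚ) / m := by
    rw [eq_div_iff (by exact_mod_cast hm)]; linarith
  have hx2 : x = Rat.divInt k m := by rw [Rat.divInt_eq_div]; exact hx
  rw [hx2]
  exact Rat.den_dvd k m


set_option maxHeartbeats 1000000 in
lemma ratio_bounds {pp qq bb E V1 V2 m A K : ℝ}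
    (hpp : 2 ≤ pp) (hqq : 1 ≤ qq) (hbb : 1 ≤ bb)
    (hE0 : 0 ≤ E) (hEp : E ≤ pp - 1)
    (hV1 : 0 < V1) (hV2 : 0 < V2) (hm1 : 1 ≤ m)
    (hbV1 : bb * V1 = m) (hbV2 : 1 ≤ bb * V2)
    (hND : pp * V2 ≤ qq * V1 + E) (hDN : qq * V1 ≤ pp * V2 + E)
    (hA : A = 2*(pp-1)*bb + 2) (hK : K = qq * A^2 + A) :
    (pp*V2) / (qq*V1) - 1 ≤ K / m ∧ ((pp*V2) / (qq*V1))⁻¹ - 1 ≤ K / m := by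
  have hbb0 : 0 < bb := by linarith
  have hqq0 : 0 < qq := by linarith
  have hpp0 : 0 < pp := by linarith
  have hm0 : 0 < m := by linarith
  have hA2 : 2 ≤ A := by nlinarith
  have hA0 : 0 < A := by linarith
  have hK0 : 0 < K := by nlinarith
  have hKA : A ≤ K := by nlinarith
  have hN1 : 0 < pp * V2 := by positivity
  have hD1 : 0 < qq * V1 := by positivity
  have hEb : E * bb ≤ A := by nlinarith [mul_le_mul_of_nonneg_right hEp hbb0.le]
  have hKq : 2 * A ≤ K * qq := by nlinarith [sq_nonneg (A-1), mul_pos hA0 hA0]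
  have hEm : E * m ≤ A * V1 := by
    have e1 : E * m = (E*bb) * V1 := by rw [← hbV1]; ring
    have e2 : (E*bb)*V1 ≤ A * V1 := mul_le_mul_of_nonneg_right hEb hV1.le
    linarith
  constructor
  · rw [div_sub' hD1.ne', div_le_div_iff₀ hD1 hm0]
    have t1 : (pp*V2 - qq*V1) * m ≤ E * m :=
      mul_le_mul_of_nonneg_right (by linarith) hm0.le
    have t2 : A * V1 ≤ A * (qq*V1) := by
      have : 0 ≤ A * V1 * (qq - 1) := mul_nonneg (by positivity) (by linarith)
      nlinarith
    have t3 : A * (qq*V1) ≤ K * (qq*V1) := mul_le_mul_of_nonneg_right hKA hD1.le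
    linarith
  · rw [inv_div, div_sub' hN1.ne', div_le_div_iff₀ hN1 hm0]
    have t1 : (qq*V1 - pp*V2) * m ≤ E * m :=
      mul_le_mul_of_nonneg_right (by linarith) hm0.le
    by_cases hsmall : 2 * E ≤ qq * V1
    · have h1 : (qq*V1) / 2 ≤ pp * V2 := by linarith
      have e3 : A * V1 ≤ (K*qq/2) * V1 :=
        mul_le_mul_of_nonneg_right (by linarith) hV1.le
      have e4 : (K*qq/2) * V1 = K * ((qq*V1)/2) := by ring
      have t2 : K * ((qq*V1)/2) ≤ K * (pp*V2) := mul_le_mul_of_nonneg_left h1 hK0.le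
      linarith
    · push_neg at hsmall
      have hqm : qq * m = (qq * V1) * bb := by rw [← hbV1]; ring
      have h2Eb : 2*E*bb ≤ A - 2 := by nlinarith [mul_le_mul_of_nonneg_right hEp hbb0.le]
      have hmA : m ≤ A := by
        have g1 : (qq*V1)*bb ≤ (2*E)*bb := mul_le_mul_of_nonneg_right hsmall.le hbb0.le
        have g2 : m ≤ qq * m := by nlinarith [mul_le_mul_of_nonneg_right hqq hm0.le]
        nlinarith
      have e1 : (qq*V1) * m * bb ≤ K := by
        have f1 : (qq*V1) * m * bb = qq * (m * m) := by rw [← hbV1]; ring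
        have g1 : m*m ≤ A*A := mul_le_mul hmA hmA hm0.le hA0.le
        have g2 : qq*(m*m) ≤ qq*(A*A) := mul_le_mul_of_nonneg_left g1 hqq0.le
        have g3 : qq*(A*A) = qq*A^2 := by ring
        linarith
      have e2 : K ≤ K * ((pp*V2)*bb) := by
        have g3 : (1:ℝ) ≤ (pp*V2)*bb := by nlinarith
        nlinarith [mul_nonneg hK0.le (by linarith : (0:ℝ) ≤ (pp*V2)*bb - 1)]
      have g4 : ((qq*V1 - pp*V2)*m)*bb ≤ (K*(pp*V2))*bb := by
        have g5 : ((qq*V1 - pp*V2)*m)*bb = (qq*V1)*m*bb - (pp*V2)*m*bb := by ring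
        have g6 : (K*(pp*V2))*bb = K*((pp*V2)*bb) := by ring
        have g7 : (0:ℝ) ≤ (pp*V2)*m*bb := by positivity
        linarith
      have g8 : ((qq*V1 - pp*V2*1)*m)*bb ≤ (K*(pp*V2))*bb := by rw [mul_one]; exact g4
      exact le_of_mul_le_mul_right g8 hbb0

open Filter Topology in
open scoped NNReal ENNReal in
set_option maxHeartbeats 1000000 in
/-- Let `u ∈ ℤ_p` be rational (with `v n ∈ ℚ` equal to the iterate `g^n(u)`) and suppose
`φ_{p,q}(u)` is not rational. Then `(p^{n+1}|u_{n+1}|_∞ q^{-r_n(u)})^{1/n} → 1`; in particular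
the real power series `Σ p^{n+1} u_{n+1} q^{-r_n(u)} T^n` has radius of convergence `1`. -/
theorem stmt16 (p q : ℕ) [Fact p.Prime] (hq : 0 < q) (hpq : Nat.Coprime p q)
    (g : ℤ_[p] → ℤ_[p])
    (hg : ∀ u : ℤ_[p], (p : ℤ_[p]) * g u =
      if (p : ℤ_[p]) ∣ u then u
      else (q : ℤ_[p]) * u + (eps0 (-((q : ℤ_[p]) * u)) : ℤ_[p]))
    (u : ℤ_[p]) (v : ℕ → ℚ)
    (hv : ∀ n : ℕ, ((v n : ℚ) : ℚ_[p]) = ((g^[n] u : ℤ_[p]) : ℚ_[p]))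
    (hirr : ((phi p q g u : ℤ_[p]) : ℚ_[p]) ∉ Set.range ((↑) : ℚ → ℚ_[p])) :
    Filter.Tendsto
      (fun n : ℕ =>
        ((p : ℝ) ^ (n + 1) * |((v (n + 1) : ℚ) : ℝ)| * ((q : ℝ) ^ rcount p g u n)⁻¹) ^
          ((n : ℝ)⁻¹))
      Filter.atTop (nhds 1) ∧
    (FormalMultilinearSeries.ofScalars ℝ
        (fun n : ℕ =>
          (p : ℝ) ^ (n + 1) * ((v (n + 1) : ℚ) : ℝ) * ((q : ℝ) ^ rcount p g u n)⁻¹)).radius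
      = 1 := by
  have hp : p.Prime := Fact.out
  have hp1 : 1 < p := hp.one_lt
  have hpR : (2:ℝ) ≤ (p:ℝ) := by exact_mod_cast hp.two_le
  have hpR0 : (0:ℝ) < (p:ℝ) := by linarith
  have hqR : (1:ℝ) ≤ (q:ℝ) := by exact_mod_cast hq
  have hqR0 : (0:ℝ) < (q:ℝ) := by linarith
  have hpz : (p : ℤ_[p]) ≠ 0 := by exact_mod_cast hp.ne_zero
  set U : ℕ → ℤ_[p] := fun n => g^[n] u with hUdef
  have hUinj : Function.Injective U := by
    by_contra hni
    rw [Function.not_injective_iff] at hni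
    obtain ⟨m1, m2, heq, hne⟩ := hni
    have key : ∀ m1 m2 : ℕ, m1 < m2 → U m1 = U m2 → False := by
      intro m1 m2 hlt hUeq
      apply hirr
      apply phi_rat_of_periodic p q g u m1 (m2 - m1) (by omega)
      have he : m1 + (m2 - m1) = m2 := by omega
      rw [he]
      exact hUeq.symm
    rcases hne.lt_or_gt with h | h
    · exact key m1 m2 h heq
    · exact key m2 m1 h heq.symm
  have hg0 : g 0 = 0 := by
    have h := hg 0
    rw [if_pos (dvd_zero _)] at h
    rcases mul_eq_zero.mp h with h2 | h2
    · exact absurd h2 hpz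
    · exact h2
  have hUsucc : ∀ n, U (n + 1) = g (U n) := fun n => Function.iterate_succ_apply' g n u
  have hUne : ∀ n, U n ≠ 0 := by
    intro n h0
    have h2 : U (n + 1) = U n := by rw [hUsucc, h0]; exact hg0
    exact (Nat.succ_ne_self n) (hUinj h2)
  have hrecZ : ∀ n, (p:ℤ_[p]) * U (n+1) =
      if (p:ℤ_[p]) ∣ U n then U n else (q:ℤ_[p]) * U n + (eps0 (-((q:ℤ_[p]) * U n)) : ℕ) := by
    intro n; rw [hUsucc]; exact hg (U n)
  -- v facts
  have hvne : ∀ n, v n ≠ 0 := by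
    intro n h0
    apply hUne n
    apply Subtype.coe_injective
    show ((g^[n] u : ℤ_[p]) : ℚ_[p]) = ((0 : ℤ_[p]) : ℚ_[p])
    rw [← hv n, h0]
    push_cast
    rfl
  have hvinj : Function.Injective v := by
    intro m1 m2 h
    apply hUinj
    apply Subtype.coe_injective
    show ((g^[m1] u : ℤ_[p]) : ℚ_[p]) = ((g^[m2] u : ℤ_[p]) : ℚ_[p])
    rw [← hv m1, ← hv m2, h]
  -- recursion over ℚ
  have hrecQ1 : ∀ n, (p:ℤ_[p]) ∣ U n → (p:ℚ) * v (n+1) = v n := by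
    intro n hdvd
    apply (Rat.cast_injective (α := ℚ_[p]))
    push_cast
    rw [hv (n+1), hv n]
    have h := hrecZ n
    rw [if_pos hdvd] at h
    exact_mod_cast congrArg ((↑) : ℤ_[p] → ℚ_[p]) h
  have hrecQ2 : ∀ n, ¬ (p:ℤ_[p]) ∣ U n →
      (p:ℚ) * v (n+1) = q * v n + (eps0 (-((q:ℤ_[p]) * U n)) : ℕ) := by
    intro n hdvd
    apply (Rat.cast_injective (α := ℚ_[p]))
    push_cast
    rw [hv (n+1), hv n]
    have h := hrecZ n
    rw [if_neg hdvd] at h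
    have h2 := congrArg ((↑) : ℤ_[p] → ℚ_[p]) h
    push_cast at h2
    exact_mod_cast h2
  -- denominators
  have hpden : ∀ n, ¬ p ∣ (v n).den := by
    intro n
    apply den_not_dvd
    rw [hv n, PadicInt.padic_norm_e_of_padicInt]
    exact PadicInt.norm_le_one _
  set b : ℕ := (v 0).den with hbdef
  have hb0 : 0 < b := (v 0).pos
  have hbR : (1:ℝ) ≤ (b:ℝ) := by exact_mod_cast hb0
  have hbR0 : (0:ℝ) < (b:ℝ) := by linarith
  have hdenb : ∀ n, (v n).den ∣ b := by
    intro n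
    induction n with
    | zero => exact dvd_rfl
    | succ n ih =>
        obtain ⟨k, hk⟩ := exists_int_of_den_dvd ih
        have hcop : Nat.Coprime (v (n+1)).den p :=
          ((Nat.Prime.coprime_iff_not_dvd hp).mpr (hpden (n+1))).symm
        have key : ∃ k2 : ℤ, ((b * p : ℕ) : ℚ) * v (n+1) = k2 := by
          by_cases hdvd : (p:ℤ_[p]) ∣ U n
          · refine ⟨k, ?_⟩
            push_cast
            calc (b:ℚ) * p * v (n+1) = (b:ℚ) * ((p:ℚ) * v (n+1)) := by ring
              _ = (b:ℚ) * v n := by rw [hrecQ1 n hdvd]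
              _ = k := hk
          · refine ⟨q * k + (eps0 (-((q:ℤ_[p]) * U n)) : ℕ) * b, ?_⟩
            push_cast
            calc (b:ℚ) * p * v (n+1) = (b:ℚ) * ((p:ℚ) * v (n+1)) := by ring
              _ = (b:ℚ) * ((q:ℚ) * v n + (eps0 (-((q:ℤ_[p]) * U n)) : ℕ)) := by
                  rw [hrecQ2 n hdvd]
              _ = (q:ℚ) * ((b:ℚ) * v n) + (eps0 (-((q:ℤ_[p]) * U n)) : ℕ) * b := by
                  push_cast; ring
              _ = (q:ℚ) * k + (eps0 (-((q:ℤ_[p]) * U n)) : ℕ) * b := by rw [hk]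
        obtain ⟨k2, hk2⟩ := key
        have hbp : ((b * p : ℕ) : ℤ) ≠ 0 := by
          have := hp.ne_zero
          positivity
        have hdvd2 : ((v (n+1)).den : ℤ) ∣ ((b * p : ℕ) : ℤ) := by
          apply den_dvd_of_int_mul hbp
          exact_mod_cast hk2
        have hdvd3 : (v (n+1)).den ∣ b * p := by exact_mod_cast hdvd2
        exact Nat.Coprime.dvd_of_dvd_mul_right hcop hdvd3
  choose a ha using fun n => exists_int_of_den_dvd (hdenb n)
  have hane : ∀ n, a n ≠ 0 := by
    intro n h0
    apply hvne n
    have h2 := ha n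
    rw [h0] at h2
    push_cast at h2
    rcases mul_eq_zero.mp h2 with h3 | h3
    · exact absurd h3 (by exact_mod_cast hb0.ne')
    · exact h3
  have hainj : Function.Injective a := by
    intro m1 m2 h
    apply hvinj
    have h1 := ha m1
    have h2 := ha m2
    have hbQ : (b:ℚ) ≠ 0 := by exact_mod_cast hb0.ne'
    rw [h] at h1
    exact mul_left_cancel₀ hbQ (h1.trans h2.symm)
  -- move to ℝ
  set V : ℕ → ℝ := fun n => ((v n : ℚ) : ℝ) with hVdef
  have hVne : ∀ n, V n ≠ 0 := fun n => by
    simp only [hVdef]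
    exact_mod_cast hvne n
  have hVabs : ∀ n, 0 < |V n| := fun n => abs_pos.mpr (hVne n)
  have haV : ∀ n, (b:ℝ) * |V n| = |(a n : ℝ)| := by
    intro n
    have h2 : (b:ℝ) * V n = (a n : ℝ) := by
      simp only [hVdef]
      exact_mod_cast ha n
    rw [← h2, abs_mul, abs_of_pos hbR0]
  have ham1 : ∀ n, (1:ℝ) ≤ |(a n : ℝ)| := by
    intro n
    have h := Int.one_le_abs (hane n)
    have h2 : ((1:ℤ):ℝ) ≤ ((|a n|:ℤ):ℝ) := by exact_mod_cast h
    simpa [Int.cast_abs] using h2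
  have ham0 : ∀ n, (0:ℝ) < |(a n : ℝ)| := fun n => lt_of_lt_of_le one_pos (ham1 n)
  have hrecR1 : ∀ n, (p:ℤ_[p]) ∣ U n → (p:ℝ) * V (n+1) = V n := by
    intro n hdvd
    simp only [hVdef]
    exact_mod_cast congrArg ((↑) : ℚ → ℝ) (hrecQ1 n hdvd)
  have hrecR2 : ∀ n, ¬(p:ℤ_[p]) ∣ U n →
      (p:ℝ) * V (n+1) = q * V n + (eps0 (-((q:ℤ_[p]) * U n)) : ℕ) := by
    intro n hdvd
    simp only [hVdef]
    exact_mod_cast congrArg ((↑) : ℚ → ℝ) (hrecQ2 n hdvd)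
  -- rcount recursion
  set rc : ℕ → ℕ := fun n => rcount p g u n with hrcdef
  have hrc : ∀ n, rc (n+1) = if (p:ℤ_[p]) ∣ U (n+1) then rc n else rc n + 1 := by
    intro n
    have h1 : rc (n+1) = ((Finset.range (n+2)).filter fun i => ¬ (p : ℤ_[p]) ∣ g^[i] u).card := rfl
    have h2 : rc n = ((Finset.range (n+1)).filter fun i => ¬ (p : ℤ_[p]) ∣ g^[i] u).card := rfl
    rw [h1, h2]
    have h3 : Finset.range (n+2) = insert (n+1) (Finset.range (n+1)) := Finset.range_add_one
    rw [h3, Finset.filter_insert]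
    by_cases hdvd : (p:ℤ_[p]) ∣ U (n+1)
    · rw [if_neg (not_not.mpr hdvd), if_pos hdvd]
    · rw [if_pos hdvd,
        Finset.card_insert_of_notMem (by simp), if_neg hdvd]
  -- B
  set B : ℕ → ℝ := fun n => (p:ℝ)^(n+1) * |V (n+1)| * ((q:ℝ)^(rc n))⁻¹ with hBdef
  have hBpos : ∀ n, 0 < B n := by
    intro n
    have h1 := hVabs (n+1)
    have h2 : (0:ℝ) < (q:ℝ)^(rc n) := by positivity
    simp only [hBdef]
    positivity
  -- constants
  set A : ℝ := 2*((p:ℝ)-1)*(b:ℝ) + 2 with hAdef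
  have hA2 : 2 ≤ A := by nlinarith
  have hA0 : 0 < A := by linarith
  set K : ℝ := (q:ℝ) * A^2 + A with hKdef
  have hK0 : 0 < K := by nlinarith
  have hKA : A ≤ K := by nlinarith
  -- step bound
  have hstep : ∀ n : ℕ, |Real.log (B (n+1)) - Real.log (B n)| ≤ K / |(a (n+1) : ℝ)| := by
    intro n
    set m : ℝ := |(a (n+1) : ℝ)| with hmdef
    have hm1 : 1 ≤ m := ham1 (n+1)
    have hm0 : 0 < m := lt_of_lt_of_le one_pos hm1
    have hV1 : 0 < |V (n+1)| := hVabs (n+1)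
    have hV2 : 0 < |V (n+2)| := hVabs (n+2)
    have hbV1 : (b:ℝ) * |V (n+1)| = m := haV (n+1)
    have hbV2 : 1 ≤ (b:ℝ) * |V (n+2)| := by rw [haV (n+2)]; exact ham1 (n+2)
    by_cases hdvd : (p:ℤ_[p]) ∣ U (n+1)
    · have hreq : rc (n+1) = rc n := by rw [hrc n, if_pos hdvd]
      have hVeq : (p:ℝ) * V (n+2) = V (n+1) := hrecR1 (n+1) hdvd
      have hVabseq : (p:ℝ) * |V (n+2)| = |V (n+1)| := by
        rw [← abs_of_pos hpR0, ← abs_mul, hVeq]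
      have hBeq : B (n+1) = B n := by
        show (p:ℝ)^(n+1+1) * |V (n+1+1)| * ((q:ℝ)^(rc (n+1)))⁻¹
          = (p:ℝ)^(n+1) * |V (n+1)| * ((q:ℝ)^(rc n))⁻¹
        rw [hreq, ← hVabseq]
        ring
      rw [hBeq, sub_self, abs_zero]
      positivity
    · have hreq : rc (n+1) = rc n + 1 := by rw [hrc n, if_neg hdvd]
      set E : ℝ := ((eps0 (-((q:ℤ_[p]) * U (n+1))) : ℕ) : ℝ) with hEdef
      have hE0 : 0 ≤ E := Nat.cast_nonneg _
      have hEp : E ≤ (p:ℝ) - 1 := by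
        have h := eps0_lt (-((q:ℤ_[p]) * U (n+1)))
        have h2 : (eps0 (-((q:ℤ_[p]) * U (n+1))) : ℕ) + 1 ≤ p := h
        have h3 := (Nat.cast_le (α := ℝ)).mpr h2
        push_cast at h3
        rw [hEdef]
        linarith
      have hVeq : (p:ℝ) * V (n+2) = (q:ℝ) * V (n+1) + E := hrecR2 (n+1) hdvd
      set N1 : ℝ := (p:ℝ) * |V (n+2)| with hN1def
      set D1 : ℝ := (q:ℝ) * |V (n+1)| with hD1def
      have hN1 : 0 < N1 := by rw [hN1def]; positivity
      have hD1 : 0 < D1 := by rw [hD1def]; positivity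
      have hND : N1 ≤ D1 + E := by
        have h1 : N1 = |(q:ℝ) * V (n+1) + E| := by
          rw [hN1def, ← hVeq, abs_mul, abs_of_pos hpR0]
        rw [h1]
        calc |(q:ℝ) * V (n+1) + E| ≤ |(q:ℝ) * V (n+1)| + |E| := abs_add_le _ _
          _ = D1 + E := by rw [abs_mul, abs_of_pos hqR0, abs_of_nonneg hE0, hD1def]
      have hDN : D1 ≤ N1 + E := by
        have h1 : D1 = |((q:ℝ) * V (n+1) + E) - E| := by
          rw [add_sub_cancel_right, abs_mul, abs_of_pos hqR0, hD1def]
        rw [h1]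
        calc |((q:ℝ) * V (n+1) + E) - E| ≤ |(q:ℝ) * V (n+1) + E| + |E| := abs_sub _ _
          _ = N1 + E := by rw [← hVeq, abs_mul, abs_of_pos hpR0, abs_of_nonneg hE0, hN1def]
      have hVc1 : |V (n+1)| ≠ 0 := hV1.ne'
      have hqp : ((q:ℝ)^(rc n)) ≠ 0 := by positivity
      have hBrat : B (n+1) = B n * (N1 / D1) := by
        show (p:ℝ)^(n+1+1) * |V (n+1+1)| * ((q:ℝ)^(rc (n+1)))⁻¹
          = (p:ℝ)^(n+1) * |V (n+1)| * ((q:ℝ)^(rc n))⁻¹ * (N1 / D1)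
        rw [hreq, hN1def, hD1def, pow_succ ((q:ℝ)) (rc n), pow_succ (p:ℝ) (n+1)]
        field_simp
      have hlogdiff : Real.log (B (n+1)) - Real.log (B n) = Real.log (N1 / D1) := by
        rw [hBrat, Real.log_mul (hBpos n).ne' (by positivity)]
        ring
      rw [hlogdiff]
      have hy0 : 0 < N1 / D1 := by positivity
      have hbound := abs_log_le hy0
      have hados := ratio_bounds hpR hqR hbR hE0 hEp hV1 hV2 hm1 hbV1 hbV2 hND hDN hAdef hKdef
      calc |Real.log (N1 / D1)| ≤ max (N1/D1 - 1) ((N1/D1)⁻¹ - 1) := hbound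
        _ ≤ K / m := max_le hados.1 hados.2
  -- telescoping
  have htel : ∀ n : ℕ, |Real.log (B n) - Real.log (B 0)|
      ≤ ∑ i ∈ Finset.range n, K / |(a (i+1) : ℝ)| :=
    abs_telescope (fun n => Real.log (B n)) (fun i => K / |(a (i+1) : ℝ)|) hstep
  have hC0 : ∀ n : ℕ, |Real.log (B n)|
      ≤ |Real.log (B 0)| + ∑ i ∈ Finset.range n, K / |(a (i+1) : ℝ)| := by
    intro n
    have h1 := htel n
    have h2 := abs_sub_abs_le_abs_sub (Real.log (B n)) (Real.log (B 0))
    linarith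
  -- counting
  have hcount : ∀ (M : ℕ) (n : ℕ),
      ((((Finset.range n).filter (fun i => (a (i+1)).natAbs ≤ M)).card : ℝ)) ≤ 2*(M:ℝ)+1 := by
    intro M n
    have hcard : (((Finset.range n).filter (fun i => (a (i+1)).natAbs ≤ M)).card)
        ≤ (Finset.Icc (-(M:ℤ)) (M:ℤ)).card := by
      apply Finset.card_le_card_of_injOn (fun i => a (i+1))
      · intro i hi
        simp only [Finset.coe_filter, Set.mem_setOf_eq, Finset.mem_filter] at hi
        simp only [Finset.coe_Icc, Set.mem_Icc, Finset.mem_Icc]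
        omega
      · intro i _ j _ hij
        have := hainj hij
        omega
    have hIcc : (Finset.Icc (-(M:ℤ)) (M:ℤ)).card = 2*M+1 := by
      rw [Int.card_Icc]; omega
    rw [hIcc] at hcard
    exact_mod_cast hcard
  -- sum bound
  have hsumb : ∀ (M : ℕ), 0 < M → ∀ n : ℕ,
      (∑ i ∈ Finset.range n, K / |(a (i+1) : ℝ)|) ≤ K*(2*(M:ℝ)+1) + n * (K/(M:ℝ)) := by
    intro M hM n
    have hMR : (0:ℝ) < (M:ℝ) := by exact_mod_cast hM
    rw [← Finset.sum_filter_add_sum_filter_not (Finset.range n) (fun i => (a (i+1)).natAbs ≤ M)]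
    have hpart1 : (∑ i ∈ (Finset.range n).filter (fun i => (a (i+1)).natAbs ≤ M),
        K / |(a (i+1) : ℝ)|) ≤ (2*(M:ℝ)+1) * K := by
      calc (∑ i ∈ (Finset.range n).filter (fun i => (a (i+1)).natAbs ≤ M), K / |(a (i+1) : ℝ)|)
          ≤ ((Finset.range n).filter (fun i => (a (i+1)).natAbs ≤ M)).card • K :=
            Finset.sum_le_card_nsmul _ _ K (fun i _ => div_le_self hK0.le (ham1 (i+1)))
        _ = (((Finset.range n).filter (fun i => (a (i+1)).natAbs ≤ M)).card : ℝ) * K := by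
            rw [nsmul_eq_mul]
        _ ≤ (2*(M:ℝ)+1) * K := by
            apply mul_le_mul_of_nonneg_right (hcount M n) hK0.le
    have hpart2 : (∑ i ∈ (Finset.range n).filter (fun i => ¬ (a (i+1)).natAbs ≤ M),
        K / |(a (i+1) : ℝ)|) ≤ (n:ℝ) * (K/(M:ℝ)) := by
      have hterm : ∀ i ∈ (Finset.range n).filter (fun i => ¬ (a (i+1)).natAbs ≤ M),
          K / |(a (i+1) : ℝ)| ≤ K/(M:ℝ) := by
        intro i hi
        simp only [Finset.mem_filter] at hi
        have hMa : (M:ℝ) ≤ |(a (i+1) : ℝ)| := by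
          have h1 : (M:ℝ) ≤ ((a (i+1)).natAbs : ℝ) := by
            have := hi.2
            exact_mod_cast Nat.le_of_lt (by omega)
          have h2 : (((a (i+1)).natAbs : ℕ) : ℝ) = |(a (i+1) : ℝ)| := by
            rw [Nat.cast_natAbs, Int.cast_abs]
          linarith
        exact div_le_div_of_nonneg_left hK0.le hMR hMa
      calc (∑ i ∈ (Finset.range n).filter (fun i => ¬ (a (i+1)).natAbs ≤ M), K / |(a (i+1) : ℝ)|)
          ≤ ((Finset.range n).filter (fun i => ¬ (a (i+1)).natAbs ≤ M)).card • (K/(M:ℝ)) :=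
            Finset.sum_le_card_nsmul _ _ _ hterm
        _ = (((Finset.range n).filter (fun i => ¬ (a (i+1)).natAbs ≤ M)).card : ℝ) * (K/(M:ℝ)) := by
            rw [nsmul_eq_mul]
        _ ≤ (n:ℝ) * (K/(M:ℝ)) := by
            apply mul_le_mul_of_nonneg_right _ (by positivity)
            have h3 : ((Finset.range n).filter (fun i => ¬ (a (i+1)).natAbs ≤ M)).card ≤ n := by
              calc _ ≤ (Finset.range n).card := Finset.card_filter_le _ _
                _ = n := Finset.card_range n
            exact_mod_cast h3
    linarith
  -- tendsto of log ratio
  have hlogtend : Tendsto (fun n : ℕ => Real.log (B n) * (n:ℝ)⁻¹) atTop (𝓝 0) := by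
    rw [Metric.tendsto_atTop]
    intro ε hε
    set M : ℕ := ⌈(2*K)/ε⌉₊ + 1 with hMdef
    have hM : 0 < M := Nat.succ_pos _
    have hMR : (0:ℝ) < M := by exact_mod_cast hM
    have hKM : K/(M:ℝ) ≤ ε/2 := by
      have h1 : (2*K)/ε ≤ (M:ℝ) := by
        calc (2*K)/ε ≤ (⌈(2*K)/ε⌉₊ : ℝ) := Nat.le_ceil _
          _ ≤ (M:ℝ) := by rw [hMdef]; push_cast; linarith
      have h2 : 2*K ≤ (M:ℝ) * ε := by
        rw [div_le_iff₀ hε] at h1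
        linarith
      rw [div_le_iff₀ hMR]
      linarith
    set C : ℝ := |Real.log (B 0)| + K*(2*(M:ℝ)+1) with hCdef
    have hCpos : 0 < C := by
      have := abs_nonneg (Real.log (B 0))
      have : (0:ℝ) < K*(2*(M:ℝ)+1) := by positivity
      rw [hCdef]
      positivity
    obtain ⟨N, hN⟩ := exists_nat_gt (C / (ε/2))
    refine ⟨N + 1, fun n hn => ?_⟩
    have hn1 : 1 ≤ n := le_trans (Nat.le_add_left 1 N) hn
    have hnR : (0:ℝ) < n := by exact_mod_cast hn1
    have hbound : |Real.log (B n)| ≤ C + n * (ε/2) := by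
      have hs := hsumb M hM n
      have hc0 := hC0 n
      have h4 : (n:ℝ) * (K/(M:ℝ)) ≤ (n:ℝ) * (ε/2) := mul_le_mul_of_nonneg_left hKM hnR.le
      rw [hCdef]
      linarith
    rw [Real.dist_eq, sub_zero]
    have habs2 : |Real.log (B n) * (n:ℝ)⁻¹| = |Real.log (B n)| * (n:ℝ)⁻¹ := by
      rw [abs_mul, abs_inv, abs_of_pos hnR]
    rw [habs2]
    have hCn : C / (n:ℝ) < ε/2 := by
      rw [div_lt_iff₀ hnR]
      have hNn : (N:ℝ) < (n:ℝ) := by exact_mod_cast (by omega : N < n)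
      have hC_lt : C < (N:ℝ) * (ε/2) := by
        rw [div_lt_iff₀ (by linarith : (0:ℝ) < ε/2)] at hN
        linarith
      have : (N:ℝ) * (ε/2) ≤ (n:ℝ) * (ε/2) := by nlinarith
      linarith [mul_comm (ε/2) (n:ℝ)]
    calc |Real.log (B n)| * (n:ℝ)⁻¹ ≤ (C + n * (ε/2)) * (n:ℝ)⁻¹ := by
          apply mul_le_mul_of_nonneg_right hbound (by positivity)
      _ = C/(n:ℝ) + ε/2 := by field_simp
      _ < ε := by linarith
  -- conclude part 1
  have hrpow : ∀ n : ℕ, B n ^ ((n:ℝ)⁻¹) = Real.exp (Real.log (B n) * (n:ℝ)⁻¹) := by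
    intro n
    rw [Real.rpow_def_of_pos (hBpos n)]
  have htend : Tendsto (fun n : ℕ => B n ^ ((n:ℝ)⁻¹)) atTop (𝓝 1) := by
    have h := (Real.continuous_exp.tendsto 0).comp hlogtend
    rw [Real.exp_zero] at h
    exact Tendsto.congr (fun n => (hrpow n).symm) h
  constructor
  · exact htend
  · -- radius
    set c : ℕ → ℝ := fun n => (p:ℝ)^(n+1) * ((v (n+1) : ℚ) : ℝ) * ((q:ℝ)^(rcount p g u n))⁻¹
      with hcdef
    have habs : ∀ n, ‖c n‖ = B n := by
      intro n
      have h1 : ‖c n‖ = |(p:ℝ)^(n+1) * ((v (n+1):ℚ):ℝ) * ((q:ℝ)^(rcount p g u n))⁻¹| := rfl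
      rw [h1, abs_mul, abs_mul, abs_of_pos (pow_pos hpR0 (n+1)),
        abs_of_pos (inv_pos.mpr (pow_pos hqR0 (rcount p g u n)))]
    have h1 : Tendsto (fun n : ℕ => (‖c n‖₊ ^ (1/(n:ℝ)) : ℝ≥0)) atTop (𝓝 1) := by
      rw [← NNReal.tendsto_coe]
      have heq : ∀ n : ℕ, ((‖c n‖₊ ^ (1/(n:ℝ)) : ℝ≥0) : ℝ) = B n ^ ((n:ℝ)⁻¹) := by
        intro n
        rw [NNReal.coe_rpow, coe_nnnorm, habs, one_div]
      have h2 := Tendsto.congr (fun n => (heq n).symm) htend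
      simpa using h2
    have h2 : Tendsto (fun n : ℕ =>
        ((‖(FormalMultilinearSeries.ofScalars ℝ c) n‖₊ ^ (1/(n:ℝ)) : ℝ≥0) : ℝ≥0∞))
        atTop (𝓝 1) := by
      rw [← ENNReal.coe_one, ENNReal.tendsto_coe]
      have hnorm : ∀ n, ‖(FormalMultilinearSeries.ofScalars ℝ c) n‖₊ = ‖c n‖₊ := by
        intro n
        have h3 := FormalMultilinearSeries.ofScalars_norm (E := ℝ) c n
        exact NNReal.coe_injective (by simpa using h3)
      simpa [hnorm] using h1
    have h3 : Tendsto (fun n : ℕ =>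
        (1 / ((‖(FormalMultilinearSeries.ofScalars ℝ c) n‖₊ ^ (1/(n:ℝ)) : ℝ≥0)) : ℝ≥0∞))
        atTop (𝓝 1) := by
      have h4 := (continuous_inv.tendsto (1:ℝ≥0∞)).comp h2
      rw [inv_one] at h4
      refine Tendsto.congr (fun n => ?_) h4
      simp [one_div]
    rw [FormalMultilinearSeries.radius_eq_liminf]
    exact h3.liminf_eq
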